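/- arXiv:math-ph/9905001 — 2 statements merged into one kernel-verified Lean document; each statement's English description precedes it below -/
import Mathlib

section
/- Trace of the leading-order heat kernel of a non-Laplace type operator: under the projection hypotheses on the leading symbol A(ξ) = Σ_{i=1}^{s} μ_i‖ξ‖²Π_i(ξ), for every t > 0 and every x ∈ ℝ^m the function ξ ↦ e^{i⟨ξ,x⟩}·tr(exp(−t·A(ξ))) is integrable on ℝ^m and (2π)^{−m} ∫_{ℝ^m} e^{i⟨ξ,x⟩}·tr(exp(−t·A(ξ))) dξ = Σ_{i=1}^{s} d_i·(4πtμ_i)^{−m/2}·exp(−‖x‖²/(4tμ_i)). -/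
open MeasureTheory Matrix

namespace NLT

open scoped RealInnerProductSpace

section Aux

variable {ι : Type*} [Fintype ι] {d : ℕ}

lemma pow_sum_smul_proj (c : ι → ℂ) (P : ι → Matrix (Fin d) (Fin d) ℂ)
    (hidem : ∀ i, P i * P i = P i) (horth : ∀ i j, i ≠ j → P i * P j = 0)
    (hsum : ∑ i, P i = 1) (n : ℕ) :
    (∑ i, c i • P i) ^ n = ∑ i, (c i ^ n) • P i := by
  induction n with
  | zero => simp [hsum]
  | succ n ih =>
    rw [pow_succ, ih, Finset.sum_mul_sum]
    refine Finset.sum_congr rfl fun i _ => ?_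
    rw [Finset.sum_eq_single i]
    · rw [smul_mul_smul_comm, hidem i, pow_succ]
    · intro j _ hj
      rw [smul_mul_smul_comm, horth i j (Ne.symm hj), smul_zero]
    · intro h; exact absurd (Finset.mem_univ i) h

lemma exp_sum_smul_proj (c : ι → ℂ) (P : ι → Matrix (Fin d) (Fin d) ℂ)
    (hidem : ∀ i, P i * P i = P i) (horth : ∀ i j, i ≠ j → P i * P j = 0)
    (hsum : ∑ i, P i = 1) :
    NormedSpace.exp (∑ i, c i • P i) = ∑ i, Complex.exp (c i) • P i := by
  have key : HasSum (fun n : ℕ => ((n.factorial : ℂ)⁻¹) • (∑ i, c i • P i) ^ n)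
      (∑ i, Complex.exp (c i) • P i) := by
    have hrw : (fun n : ℕ => ((n.factorial : ℂ)⁻¹) • (∑ i, c i • P i) ^ n)
        = fun n : ℕ => ∑ i, (((n.factorial : ℂ)⁻¹) * c i ^ n) • P i := by
      funext n
      rw [pow_sum_smul_proj c P hidem horth hsum n, Finset.smul_sum]
      exact Finset.sum_congr rfl fun i _ => (smul_smul _ _ _)
    rw [hrw]
    refine hasSum_sum fun i _ => ?_
    have hc : HasSum (fun n : ℕ => ((n.factorial : ℂ)⁻¹) • c i ^ n)
        (NormedSpace.exp (c i)) := NormedSpace.exp_series_hasSum_exp' (𝕂 := ℂ) (c i)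
    have := hc.smul_const (P i)
    rw [← Complex.exp_eq_exp_ℂ] at this
    simpa [smul_eq_mul, smul_smul] using this
  rw [NormedSpace.exp_eq_tsum (𝕂 := ℂ)]
  exact key.tsum_eq

lemma const_rpow_eq (m : ℕ) {a : ℝ} (ha : 0 < a) :
    (2 * Real.pi) ^ (-(m : ℝ)) * (Real.pi / a) ^ ((m : ℝ) / 2)
      = (4 * Real.pi * a) ^ (-(m : ℝ) / 2) := by
  have hπ := Real.pi_pos
  have h1 : (4 * Real.pi * a) ^ ((m : ℝ) / 2) * (Real.pi / a) ^ ((m : ℝ) / 2)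
      = (2 * Real.pi) ^ (m : ℝ) := by
    rw [← Real.mul_rpow (by positivity) (by positivity)]
    have hb : 4 * Real.pi * a * (Real.pi / a) = (2 * Real.pi) ^ (2 : ℝ) := by
      rw [Real.rpow_two]; field_simp; ring
    rw [hb, ← Real.rpow_mul (by positivity : (0:ℝ) ≤ 2 * Real.pi)]
    congr 1
    ring
  have h2 : (0:ℝ) < (2 * Real.pi) ^ (m : ℝ) := by positivity
  have h3 : (0:ℝ) < (4 * Real.pi * a) ^ ((m : ℝ) / 2) := by positivity
  rw [Real.rpow_neg (by positivity), neg_div, Real.rpow_neg (by positivity)]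
  refine eq_inv_of_mul_eq_one_left ?_
  rw [mul_right_comm, mul_assoc, h1, inv_mul_cancel₀ h2.ne']

end Aux

/-- The leading symbol `A(ξ) = ∑ᵢ μᵢ ‖ξ‖² Πᵢ(ξ)` of a non-Laplace type operator. -/
noncomputable def leadSymb {m d s : ℕ} (μ : Fin s → ℝ)
    (Pi : Fin s → EuclideanSpace ℝ (Fin m) → Matrix (Fin d) (Fin d) ℂ)
    (ξ : EuclideanSpace ℝ (Fin m)) : Matrix (Fin d) (Fin d) ℂ :=
  ∑ i, ((μ i * ‖ξ‖ ^ 2 : ℝ) : ℂ) • Pi i ξ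

/-- Trace of the leading-order heat kernel of a non-Laplace type operator: for `t > 0`,
`(2π)^{−m} ∫ e^{i⟨ξ,x⟩} tr exp(−tA(ξ)) dξ = ∑ᵢ dᵢ (4πtμᵢ)^{−m/2} e^{−‖x‖²/(4tμᵢ)}`. -/
theorem leading_heat_trace (m d s : ℕ) (hm : 1 ≤ m) (hd : 1 ≤ d) (hs : 1 ≤ s)
    (μ : Fin s → ℝ) (hμ : ∀ i, 0 < μ i) (dd : Fin s → ℕ)
    (Pi : Fin s → EuclideanSpace ℝ (Fin m) → Matrix (Fin d) (Fin d) ℂ)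
    (hcont : ∀ i, ContinuousOn (Pi i) {(0 : EuclideanSpace ℝ (Fin m))}ᶜ)
    (hhom : ∀ i, ∀ c : ℝ, 0 < c → ∀ ξ : EuclideanSpace ℝ (Fin m), ξ ≠ 0 →
      Pi i (c • ξ) = Pi i ξ)
    (hidem : ∀ i, ∀ ξ : EuclideanSpace ℝ (Fin m), ξ ≠ 0 → Pi i ξ * Pi i ξ = Pi i ξ)
    (horth : ∀ i j, i ≠ j → ∀ ξ : EuclideanSpace ℝ (Fin m), ξ ≠ 0 → Pi i ξ * Pi j ξ = 0)
    (hsum : ∀ ξ : EuclideanSpace ℝ (Fin m), ξ ≠ 0 → ∑ i, Pi i ξ = 1)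
    (htr : ∀ i, ∀ ξ : EuclideanSpace ℝ (Fin m), ξ ≠ 0 → (Pi i ξ).trace = (dd i : ℂ)) :
    ∀ t : ℝ, 0 < t → ∀ x : EuclideanSpace ℝ (Fin m),
      Integrable (fun ξ : EuclideanSpace ℝ (Fin m) =>
        Complex.exp (Complex.I * ((inner ℝ ξ x : ℝ) : ℂ))
          * (NormedSpace.exp ((-(t : ℂ)) • leadSymb μ Pi ξ)).trace) ∧
      (((2 * Real.pi) ^ (-(m : ℝ)) : ℝ) : ℂ)
          * ∫ ξ : EuclideanSpace ℝ (Fin m),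
              Complex.exp (Complex.I * ((inner ℝ ξ x : ℝ) : ℂ))
                * (NormedSpace.exp ((-(t : ℂ)) • leadSymb μ Pi ξ)).trace
        = ∑ i, (dd i : ℂ) * (((4 * Real.pi * t * μ i) ^ (-(m : ℝ) / 2) : ℝ) : ℂ)
            * Complex.exp (-((‖x‖ ^ 2 / (4 * t * μ i) : ℝ) : ℂ)) := by
  intro t ht x
  haveI : Nonempty (Fin m) := ⟨⟨0, hm⟩⟩
  haveI : Nontrivial (EuclideanSpace ℝ (Fin m)) := by
    exact inferInstance
  -- the Gaussian comparison function
  set g : EuclideanSpace ℝ (Fin m) → ℂ := fun ξ =>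
    ∑ i, (dd i : ℂ) * Complex.exp (-(((t * μ i : ℝ)) : ℂ) * ‖ξ‖ ^ 2 + Complex.I * ⟪x, ξ⟫) with hg
  -- pointwise equality away from 0
  have hkey : ∀ ξ : EuclideanSpace ℝ (Fin m), ξ ≠ 0 →
      Complex.exp (Complex.I * ((inner ℝ ξ x : ℝ) : ℂ))
        * (NormedSpace.exp ((-(t : ℂ)) • leadSymb μ Pi ξ)).trace = g ξ := by
    intro ξ hξ
    have hM : (-(t : ℂ)) • leadSymb μ Pi ξ
        = ∑ i, ((-(t * μ i * ‖ξ‖ ^ 2) : ℝ) : ℂ) • Pi i ξ := by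
      rw [leadSymb, Finset.smul_sum]
      refine Finset.sum_congr rfl fun i _ => ?_
      rw [smul_smul]
      congr 1
      push_cast
      ring
    rw [hM, exp_sum_smul_proj _ _ (fun i => hidem i ξ hξ)
      (fun i j hij => horth i j hij ξ hξ) (hsum ξ hξ)]
    rw [Matrix.trace_sum]
    have htr' : ∀ i : Fin s,
        (Complex.exp (((-(t * μ i * ‖ξ‖ ^ 2) : ℝ) : ℂ)) • Pi i ξ).trace
          = (dd i : ℂ) * Complex.exp (((-(t * μ i * ‖ξ‖ ^ 2) : ℝ) : ℂ)) := by
      intro i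
      rw [Matrix.trace_smul, htr i ξ hξ, smul_eq_mul, mul_comm]
    rw [Finset.sum_congr rfl fun i _ => htr' i, Finset.mul_sum, hg]
    refine Finset.sum_congr rfl fun i _ => ?_
    rw [mul_comm (Complex.exp _) _, mul_assoc, ← Complex.exp_add]
    congr 1
    · have : (⟪x, ξ⟫ : ℝ) = (inner ℝ ξ x : ℝ) := by rw [real_inner_comm]
      rw [this]
      push_cast
      ring
  -- a.e. equality
  have h0 : (volume : Measure (EuclideanSpace ℝ (Fin m))) {0} = 0 := measure_singleton 0
  have hae : (fun ξ : EuclideanSpace ℝ (Fin m) =>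
      Complex.exp (Complex.I * ((inner ℝ ξ x : ℝ) : ℂ))
        * (NormedSpace.exp ((-(t : ℂ)) • leadSymb μ Pi ξ)).trace) =ᵐ[volume] g := by
    filter_upwards [compl_mem_ae_iff.2 h0] with ξ hξ
    exact hkey ξ hξ
  -- integrability of g
  have hgi : Integrable g := by
    refine integrable_finset_sum _ fun i _ => ?_
    have hb : (0:ℝ) < ((t * μ i : ℝ) : ℂ).re := by
      simp only [Complex.ofReal_re]
      exact mul_pos ht (hμ i)
    exact (GaussianFourier.integrable_cexp_neg_mul_sq_norm_add hb Complex.I x).const_mul _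
  refine ⟨hgi.congr hae.symm, ?_⟩
  rw [integral_congr_ae hae]
  rw [hg, integral_finset_sum _ (fun i _ => by
    have hb : (0:ℝ) < ((t * μ i : ℝ) : ℂ).re := by
      simp only [Complex.ofReal_re]
      exact mul_pos ht (hμ i)
    exact (GaussianFourier.integrable_cexp_neg_mul_sq_norm_add hb Complex.I x).const_mul _)]
  rw [Finset.mul_sum]
  refine Finset.sum_congr rfl fun i _ => ?_
  have hb : (0:ℝ) < ((t * μ i : ℝ) : ℂ).re := by
    simp only [Complex.ofReal_re]
    exact mul_pos ht (hμ i)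
  rw [integral_const_mul, GaussianFourier.integral_cexp_neg_mul_sq_norm_add hb Complex.I x]
  have hfr : (Module.finrank ℝ (EuclideanSpace ℝ (Fin m)) : ℂ) = (m : ℂ) := by
    norm_cast
    exact finrank_euclideanSpace_fin
  -- the cpow factor
  have htμ : (0:ℝ) < t * μ i := mul_pos ht (hμ i)
  have hpow : ((Real.pi : ℂ) / ((t * μ i : ℝ) : ℂ)) ^ ((Module.finrank ℝ (EuclideanSpace ℝ (Fin m)) : ℂ) / 2)
      = (((Real.pi / (t * μ i)) ^ ((m : ℝ) / 2) : ℝ) : ℂ) := by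
    rw [hfr]
    rw [Complex.ofReal_cpow (by positivity)]
    push_cast
    ring_nf
  -- the exponential factor
  have hexp : Complex.exp (Complex.I ^ 2 * (‖x‖ : ℂ) ^ 2 / (4 * ((t * μ i : ℝ) : ℂ)))
      = Complex.exp (-((‖x‖ ^ 2 / (4 * t * μ i) : ℝ) : ℂ)) := by
    congr 1
    rw [Complex.I_sq]
    have ht' : (t : ℂ) ≠ 0 := by exact_mod_cast ht.ne'
    have hμ' : ((μ i : ℝ) : ℂ) ≠ 0 := by exact_mod_cast (hμ i).ne'
    push_cast
    field_simp
  rw [hpow, hexp]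
  -- constant arithmetic
  have hc : (((2 * Real.pi) ^ (-(m : ℝ)) : ℝ) : ℂ)
      * (((Real.pi / (t * μ i)) ^ ((m : ℝ) / 2) : ℝ) : ℂ)
      = (((4 * Real.pi * t * μ i) ^ (-(m : ℝ) / 2) : ℝ) : ℂ) := by
    rw [← Complex.ofReal_mul, const_rpow_eq m htμ]
    norm_num [mul_assoc]
  rw [show (((2 * Real.pi) ^ (-(m : ℝ)) : ℝ) : ℂ)
        * ((dd i : ℂ) * ((((Real.pi / (t * μ i)) ^ ((m : ℝ) / 2) : ℝ) : ℂ)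
          * Complex.exp (-((‖x‖ ^ 2 / (4 * t * μ i) : ℝ) : ℂ))))
      = (dd i : ℂ) * ((((2 * Real.pi) ^ (-(m : ℝ)) : ℝ) : ℂ)
          * (((Real.pi / (t * μ i)) ^ ((m : ℝ) / 2) : ℝ) : ℂ))
          * Complex.exp (-((‖x‖ ^ 2 / (4 * t * μ i) : ℝ) : ℂ)) from by ring, hc]

end NLT
end

section
/- Leading heat kernel coefficient a₀ of a non-Laplace type operator: under the projection hypotheses on the leading symbol A(ξ) = Σ_{i=1}^{s} μ_i‖ξ‖²Π_i(ξ), the matrix-valued function ξ ↦ exp(−A(ξ)) is integrable on ℝ^m∖{0} and π^{−m/2} ∫_{ℝ^m} exp(−A(ξ)) dξ = Σ_{i=1}^{s} μ_i^{−m/2} · ⟨Π_i⟩, where ⟨Π_i⟩ := π^{−m/2} ∫_{ℝ^m} e^{−‖ξ‖²} Π_i(ξ) dξ. In particular, taking traces, π^{−m/2} ∫_{ℝ^m} tr(exp(−A(ξ))) dξ = Σ_{i=1}^{s} d_i·μ_i^{−m/2}. -/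
open MeasureTheory Matrix

namespace NLT

lemma exp_sum_orth {𝔸 : Type*} [NormedRing 𝔸] [NormedAlgebra ℂ 𝔸] [CompleteSpace 𝔸]
    {s : ℕ} (z : Fin s → ℂ) (P : Fin s → 𝔸)
    (hidem : ∀ i, P i * P i = P i)
    (horth : ∀ i j, i ≠ j → P i * P j = 0)
    (hsum : ∑ i, P i = 1) :
    NormedSpace.exp (∑ i, z i • P i) = ∑ i, Complex.exp (z i) • P i := by
  set X : 𝔸 := ∑ i, z i • P i with hX
  have hpow : ∀ n : ℕ, X ^ (n + 1) = ∑ i, z i ^ (n + 1) • P i := by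
    intro n
    induction n with
    | zero => simp [hX]
    | succ n ih =>
      rw [pow_succ, ih, hX, Finset.sum_mul_sum]
      refine Finset.sum_congr rfl fun i _ => ?_
      rw [Finset.sum_eq_single i]
      · rw [smul_mul_smul_comm, hidem i, ← pow_succ]
      · intro j _ hji
        rw [smul_mul_smul_comm, horth i j (Ne.symm hji), smul_zero]
      · simp
  have hshift : ∀ w : ℂ, Summable fun n : ℕ => (((n + 1).factorial : ℂ))⁻¹ * w ^ (n + 1) := by
    intro w
    have hsumm : Summable fun n : ℕ => (((n).factorial : ℂ))⁻¹ * w ^ n := by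
      simpa [smul_eq_mul] using NormedSpace.expSeries_summable' (𝕂 := ℂ) w
    exact (summable_nat_add_iff
      (f := fun n : ℕ => (((n).factorial : ℂ))⁻¹ * w ^ n) 1).2 hsumm
  have hscal : ∀ w : ℂ, ∑' n : ℕ, (((n + 1).factorial : ℂ))⁻¹ * w ^ (n + 1)
      = Complex.exp w - 1 := by
    intro w
    have hsumm : Summable fun n : ℕ => (((n).factorial : ℂ))⁻¹ * w ^ n := by
      simpa [smul_eq_mul] using NormedSpace.expSeries_summable' (𝕂 := ℂ) w
    have h0 : ∑' n : ℕ, (((n).factorial : ℂ))⁻¹ * w ^ n = Complex.exp w := by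
      rw [Complex.exp_eq_exp_ℂ, NormedSpace.exp_eq_tsum (𝕂 := ℂ)]
      simp [smul_eq_mul]
    have h1 := Summable.tsum_eq_zero_add hsumm
    rw [h0] at h1
    simp only [Nat.factorial_zero, Nat.cast_one, inv_one, pow_zero, mul_one] at h1
    rw [h1]; ring
  have hXsummable : Summable fun n : ℕ => (((n).factorial : ℂ))⁻¹ • X ^ n :=
    NormedSpace.expSeries_summable' (𝕂 := ℂ) X
  simp only [NormedSpace.exp_eq_tsum (𝕂 := ℂ)]
  rw [Summable.tsum_eq_zero_add hXsummable]
  have hterm : ∀ n : ℕ, ((((n + 1)).factorial : ℂ))⁻¹ • X ^ (n + 1)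
      = ∑ i, ((((n + 1).factorial : ℂ))⁻¹ * z i ^ (n + 1)) • P i := by
    intro n
    rw [hpow, Finset.smul_sum]
    exact Finset.sum_congr rfl fun i _ => (smul_smul _ _ _)
  simp only [hterm, pow_zero, Nat.factorial_zero, Nat.cast_one, inv_one, one_smul]
  rw [Summable.tsum_finsetSum (fun i _ => (hshift (z i)).smul_const (P i))]
  have hfin : ∀ i, ∑' n : ℕ, ((((n + 1).factorial : ℂ))⁻¹ * z i ^ (n + 1)) • P i
      = (Complex.exp (z i) - 1) • P i := by
    intro i
    rw [Summable.tsum_smul_const (hshift (z i)), hscal]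
  simp only [hfin, sub_smul, one_smul, Finset.sum_sub_distrib, hsum]
  abel

/-- The Gaussian average `⟨Πᵢ⟩ = π^{−m/2} ∫ e^{−‖ξ‖²} Πᵢ(ξ) dξ` (taken entrywise). -/
noncomputable def gaussAvg {m d : ℕ}
    (Q : EuclideanSpace ℝ (Fin m) → Matrix (Fin d) (Fin d) ℂ) :
    Matrix (Fin d) (Fin d) ℂ :=
  Matrix.of fun a b => ((Real.pi ^ (-(m : ℝ) / 2) : ℝ) : ℂ)
    * ∫ ξ : EuclideanSpace ℝ (Fin m), ((Real.exp (-‖ξ‖ ^ 2) : ℝ) : ℂ) * Q ξ a b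

/-- Leading heat kernel coefficient `a₀` of a non-Laplace type operator:
`π^{−m/2} ∫ exp(−A(ξ)) dξ = ∑ᵢ μᵢ^{−m/2} ⟨Πᵢ⟩` (entrywise), and taking traces,
`π^{−m/2} ∫ tr exp(−A(ξ)) dξ = ∑ᵢ dᵢ μᵢ^{−m/2}`. -/
theorem leading_heat_coefficient (m d s : ℕ) (hm : 1 ≤ m) (hd : 1 ≤ d) (hs : 1 ≤ s)
    (μ : Fin s → ℝ) (hμ : ∀ i, 0 < μ i) (dd : Fin s → ℕ)
    (Pi : Fin s → EuclideanSpace ℝ (Fin m) → Matrix (Fin d) (Fin d) ℂ)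
    (hcont : ∀ i, ContinuousOn (Pi i) {(0 : EuclideanSpace ℝ (Fin m))}ᶜ)
    (hhom : ∀ i, ∀ c : ℝ, 0 < c → ∀ ξ : EuclideanSpace ℝ (Fin m), ξ ≠ 0 →
      Pi i (c • ξ) = Pi i ξ)
    (hidem : ∀ i, ∀ ξ : EuclideanSpace ℝ (Fin m), ξ ≠ 0 → Pi i ξ * Pi i ξ = Pi i ξ)
    (horth : ∀ i j, i ≠ j → ∀ ξ : EuclideanSpace ℝ (Fin m), ξ ≠ 0 → Pi i ξ * Pi j ξ = 0)
    (hsum : ∀ ξ : EuclideanSpace ℝ (Fin m), ξ ≠ 0 → ∑ i, Pi i ξ = 1)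
    (htr : ∀ i, ∀ ξ : EuclideanSpace ℝ (Fin m), ξ ≠ 0 → (Pi i ξ).trace = (dd i : ℂ)) :
    (∀ a b : Fin d, Integrable (fun ξ : EuclideanSpace ℝ (Fin m) =>
        (NormedSpace.exp (-leadSymb μ Pi ξ)) a b)) ∧
    (∀ a b : Fin d,
        ((Real.pi ^ (-(m : ℝ) / 2) : ℝ) : ℂ)
            * ∫ ξ : EuclideanSpace ℝ (Fin m), (NormedSpace.exp (-leadSymb μ Pi ξ)) a b
          = (∑ i, (((μ i ^ (-(m : ℝ) / 2) : ℝ)) : ℂ) • gaussAvg (Pi i)) a b) ∧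
    ((Real.pi ^ (-(m : ℝ) / 2) : ℝ) : ℂ)
        * ∫ ξ : EuclideanSpace ℝ (Fin m), (NormedSpace.exp (-leadSymb μ Pi ξ)).trace
      = ∑ i, (dd i : ℂ) * (((μ i ^ (-(m : ℝ) / 2) : ℝ)) : ℂ) := by
  haveI : Nonempty (Fin m) := Fin.pos_iff_nonempty.mp hm
  have hmrank : Module.finrank ℝ (EuclideanSpace ℝ (Fin m)) = m := finrank_euclideanSpace_fin
  -- a.e. nonzero
  have h0 : ∀ᵐ ξ : EuclideanSpace ℝ (Fin m) ∂(volume : Measure (EuclideanSpace ℝ (Fin m))),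
      ξ ≠ 0 := by
    refine (MeasureTheory.ae_iff).2 ?_
    simp only [not_not, Set.setOf_eq_eq_singleton]
    exact measure_singleton 0
  -- pointwise exp formula
  have hexp : ∀ ξ : EuclideanSpace ℝ (Fin m), ξ ≠ 0 → NormedSpace.exp (-leadSymb μ Pi ξ)
      = ∑ i, ((Real.exp (-(μ i * ‖ξ‖ ^ 2)) : ℝ) : ℂ) • Pi i ξ := by
    intro ξ hξ
    letI : SeminormedRing (Matrix (Fin d) (Fin d) ℂ) := Matrix.linftyOpSemiNormedRing
    letI : NormedRing (Matrix (Fin d) (Fin d) ℂ) := Matrix.linftyOpNormedRing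
    letI : NormedAlgebra ℂ (Matrix (Fin d) (Fin d) ℂ) := Matrix.linftyOpNormedAlgebra
    have h1 : -leadSymb μ Pi ξ = ∑ i, ((-(μ i * ‖ξ‖ ^ 2) : ℝ) : ℂ) • Pi i ξ := by
      rw [leadSymb, ← Finset.sum_neg_distrib]
      refine Finset.sum_congr rfl fun i _ => ?_
      rw [Complex.ofReal_neg, neg_smul]
    have h2 := exp_sum_orth (fun i => ((-(μ i * ‖ξ‖ ^ 2) : ℝ) : ℂ)) (fun i => Pi i ξ)
      (fun i => hidem i ξ hξ) (fun i j hij => horth i j hij ξ hξ) (hsum ξ hξ)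
    rw [h1]; refine h2.trans ?_
    refine Finset.sum_congr rfl fun i _ => ?_
    rw [← Complex.ofReal_exp]
  have hentry : ∀ ξ : EuclideanSpace ℝ (Fin m), ξ ≠ 0 → ∀ a b : Fin d,
      (NormedSpace.exp (-leadSymb μ Pi ξ)) a b
      = ∑ i, ((Real.exp (-(μ i * ‖ξ‖ ^ 2)) : ℝ) : ℂ) * Pi i ξ a b := by
    intro ξ hξ a b
    rw [hexp ξ hξ]
    simp [Matrix.sum_apply, Matrix.smul_apply, smul_eq_mul]
  -- continuity of entries
  have hconti : ∀ (i : Fin s) (a b : Fin d),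
      ContinuousOn (fun ξ : EuclideanSpace ℝ (Fin m) => Pi i ξ a b)
        {(0 : EuclideanSpace ℝ (Fin m))}ᶜ := by
    intro i a b
    exact ((continuous_apply b).comp (continuous_apply a)).comp_continuousOn (hcont i)
  -- uniform bound on entries
  have hbdd : ∀ (i : Fin s) (a b : Fin d), ∃ C : ℝ, 0 ≤ C ∧
      ∀ ξ : EuclideanSpace ℝ (Fin m), ξ ≠ 0 → ‖Pi i ξ a b‖ ≤ C := by
    intro i a b
    have hsub : Metric.sphere (0 : EuclideanSpace ℝ (Fin m)) 1
        ⊆ {(0 : EuclideanSpace ℝ (Fin m))}ᶜ := by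
      intro x hx
      simp only [Metric.mem_sphere, dist_zero_right] at hx
      simp only [Set.mem_compl_iff, Set.mem_singleton_iff]
      intro h
      rw [h] at hx; simp at hx
    obtain ⟨C, hC⟩ := (isCompact_sphere (0 : EuclideanSpace ℝ (Fin m)) 1).exists_bound_of_continuousOn
      ((hconti i a b).mono hsub)
    refine ⟨max C 0, le_max_right _ _, fun ξ hξ => ?_⟩
    have hn : ‖ξ‖ ≠ 0 := norm_ne_zero_iff.mpr hξ
    have hmem : (‖ξ‖⁻¹ • ξ) ∈ Metric.sphere (0 : EuclideanSpace ℝ (Fin m)) 1 := by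
      simp only [Metric.mem_sphere, dist_zero_right, norm_smul, norm_inv, norm_norm]
      exact inv_mul_cancel₀ hn
    have hhh := hC _ hmem
    rw [hhom i (‖ξ‖⁻¹) (by positivity) ξ hξ] at hhh
    exact le_trans hhh (le_max_left _ _)
  -- integrability of Gaussian
  have hgauss : ∀ b : ℝ, 0 < b →
      Integrable (fun ξ : EuclideanSpace ℝ (Fin m) => Real.exp (-(b * ‖ξ‖ ^ 2))) := by
    intro b hb
    have h := (GaussianFourier.integrable_cexp_neg_mul_sq_norm_add
      (V := EuclideanSpace ℝ (Fin m)) (b := (b : ℂ)) (by simpa using hb) 0 0).norm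
    refine h.congr ?_
    filter_upwards with ξ
    have hre : (-(b : ℂ) * (‖ξ‖ : ℂ) ^ 2
        + 0 * ((inner ℝ (0 : EuclideanSpace ℝ (Fin m)) ξ : ℝ) : ℂ))
        = ((-(b * ‖ξ‖ ^ 2) : ℝ) : ℂ) := by push_cast; ring
    rw [Complex.norm_exp, hre, Complex.ofReal_re]
  -- integrability of each piece
  have hres : (volume : Measure (EuclideanSpace ℝ (Fin m))).restrict
      {(0 : EuclideanSpace ℝ (Fin m))}ᶜ = volume :=
    Measure.restrict_eq_self_of_ae_mem (by simpa using h0)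
  have hInt : ∀ (b : ℝ), 0 < b → ∀ (i : Fin s) (a c : Fin d),
      Integrable (fun ξ : EuclideanSpace ℝ (Fin m) =>
        ((Real.exp (-(b * ‖ξ‖ ^ 2)) : ℝ) : ℂ) * Pi i ξ a c) := by
    intro b hb i a c
    obtain ⟨C, hC0, hC⟩ := hbdd i a c
    have hfc : ContinuousOn
        (fun ξ : EuclideanSpace ℝ (Fin m) => ((Real.exp (-(b * ‖ξ‖ ^ 2)) : ℝ) : ℂ) * Pi i ξ a c)
        {(0 : EuclideanSpace ℝ (Fin m))}ᶜ := by
      refine ContinuousOn.mul ?_ (hconti i a c)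
      refine Continuous.continuousOn ?_
      exact Complex.continuous_ofReal.comp (Real.continuous_exp.comp (by fun_prop))
    have hmeas : AEStronglyMeasurable
        (fun ξ : EuclideanSpace ℝ (Fin m) => ((Real.exp (-(b * ‖ξ‖ ^ 2)) : ℝ) : ℂ) * Pi i ξ a c)
        volume := by
      rw [← hres]
      exact hfc.aestronglyMeasurable (isOpen_compl_singleton).measurableSet
    refine Integrable.mono' ((hgauss b hb).const_mul C) hmeas ?_
    filter_upwards [h0] with ξ hξ
    rw [norm_mul, Complex.norm_real, Real.norm_eq_abs, abs_of_pos (Real.exp_pos _)]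
    calc Real.exp (-(b * ‖ξ‖ ^ 2)) * ‖Pi i ξ a c‖
        ≤ Real.exp (-(b * ‖ξ‖ ^ 2)) * C :=
          mul_le_mul_of_nonneg_left (hC ξ hξ) (le_of_lt (Real.exp_pos _))
      _ = C * Real.exp (-(b * ‖ξ‖ ^ 2)) := mul_comm _ _
  -- Part 1
  have hae : ∀ a b : Fin d,
      (fun ξ : EuclideanSpace ℝ (Fin m) => (NormedSpace.exp (-leadSymb μ Pi ξ)) a b)
      =ᵐ[volume] fun ξ : EuclideanSpace ℝ (Fin m) =>
        ∑ i, ((Real.exp (-(μ i * ‖ξ‖ ^ 2)) : ℝ) : ℂ) * Pi i ξ a b := by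
    intro a b
    filter_upwards [h0] with ξ hξ
    exact hentry ξ hξ a b
  have part1 : ∀ a b : Fin d, Integrable (fun ξ : EuclideanSpace ℝ (Fin m) =>
      (NormedSpace.exp (-leadSymb μ Pi ξ)) a b) := by
    intro a b
    exact (integrable_finset_sum _ (fun i _ => hInt (μ i) (hμ i) i a b)).congr (hae a b).symm
  -- change of variables
  have hCoV : ∀ (i : Fin s) (a c : Fin d),
      ∫ ξ : EuclideanSpace ℝ (Fin m), ((Real.exp (-(μ i * ‖ξ‖ ^ 2)) : ℝ) : ℂ) * Pi i ξ a c
      = ((μ i ^ (-(m : ℝ) / 2) : ℝ) : ℂ)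
        * ∫ ξ : EuclideanSpace ℝ (Fin m), ((Real.exp (-‖ξ‖ ^ 2) : ℝ) : ℂ) * Pi i ξ a c := by
    intro i a c
    set R : ℝ := (μ i) ^ (-(1 : ℝ) / 2) with hR
    have hRpos : 0 < R := Real.rpow_pos_of_pos (hμ i) _
    have hR2 : μ i * R ^ 2 = 1 := by
      have h2 : R ^ 2 = (μ i) ^ (-(1 : ℝ)) := by
        rw [hR, ← Real.rpow_natCast ((μ i) ^ (-(1 : ℝ) / 2)) 2,
          ← Real.rpow_mul (le_of_lt (hμ i))]
        norm_num
      rw [h2, Real.rpow_neg_one]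
      exact mul_inv_cancel₀ (ne_of_gt (hμ i))
    set F : EuclideanSpace ℝ (Fin m) → ℂ :=
      fun ξ => ((Real.exp (-(μ i * ‖ξ‖ ^ 2)) : ℝ) : ℂ) * Pi i ξ a c with hF
    have key : (fun x : EuclideanSpace ℝ (Fin m) => F (R • x))
        = fun x : EuclideanSpace ℝ (Fin m) => ((Real.exp (-‖x‖ ^ 2) : ℝ) : ℂ) * Pi i x a c := by
      funext x
      by_cases hx : x = 0
      · subst hx; simp [hF]
      · simp only [hF]
        rw [hhom i R hRpos x hx, norm_smul, mul_pow, Real.norm_eq_abs, sq_abs,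
          ← mul_assoc, hR2, one_mul]
    have hcov := Measure.integral_comp_smul_of_nonneg
      (volume : Measure (EuclideanSpace ℝ (Fin m))) F R (hR := le_of_lt hRpos)
    rw [key] at hcov
    have hRm : (R ^ m) ≠ 0 := pow_ne_zero _ (ne_of_gt hRpos)
    have hcRm : (μ i ^ (-(m : ℝ) / 2) : ℝ) = R ^ m := by
      rw [hR, ← Real.rpow_natCast ((μ i) ^ (-(1 : ℝ) / 2)) m,
        ← Real.rpow_mul (le_of_lt (hμ i))]
      congr 1; ring
    rw [hcov, hmrank, Complex.real_smul, hcRm, ← mul_assoc, ← Complex.ofReal_mul,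
      mul_inv_cancel₀ hRm, Complex.ofReal_one, one_mul]
  -- Part 2
  have part2 : ∀ a b : Fin d,
      ((Real.pi ^ (-(m : ℝ) / 2) : ℝ) : ℂ)
          * ∫ ξ : EuclideanSpace ℝ (Fin m), (NormedSpace.exp (-leadSymb μ Pi ξ)) a b
        = (∑ i, (((μ i ^ (-(m : ℝ) / 2) : ℝ)) : ℂ) • gaussAvg (Pi i)) a b := by
    intro a b
    rw [integral_congr_ae (hae a b),
      integral_finset_sum _ (fun i _ => hInt (μ i) (hμ i) i a b)]
    simp only [Matrix.sum_apply, Matrix.smul_apply, gaussAvg, Matrix.of_apply, smul_eq_mul]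
    rw [Finset.mul_sum]
    refine Finset.sum_congr rfl fun i _ => ?_
    rw [hCoV i a b]
    ring
  refine ⟨part1, part2, ?_⟩
  -- Part 3
  have hπ : ((Real.pi ^ (-(m : ℝ) / 2) : ℝ) : ℂ) * ((Real.pi ^ ((m : ℝ) / 2) : ℝ) : ℂ) = 1 := by
    rw [← Complex.ofReal_mul, ← Real.rpow_add Real.pi_pos,
      show (-(m : ℝ) / 2 + (m : ℝ) / 2) = 0 by ring, Real.rpow_zero, Complex.ofReal_one]
  have hgint : (∫ ξ : EuclideanSpace ℝ (Fin m), Real.exp (-‖ξ‖ ^ 2))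
      = Real.pi ^ ((m : ℝ) / 2) := by
    have h := GaussianFourier.integral_rexp_neg_mul_sq_norm
      (V := EuclideanSpace ℝ (Fin m)) (b := 1) one_pos
    rw [hmrank] at h
    simpa using h
  have htrg : ∀ i : Fin s, ∑ a : Fin d, gaussAvg (Pi i) a a = (dd i : ℂ) := by
    intro i
    simp only [gaussAvg, Matrix.of_apply]
    rw [← Finset.mul_sum]
    have hint1 : ∀ a : Fin d, Integrable (fun ξ : EuclideanSpace ℝ (Fin m) =>
        ((Real.exp (-‖ξ‖ ^ 2) : ℝ) : ℂ) * Pi i ξ a a) := by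
      intro a
      have h := hInt 1 one_pos i a a
      simpa [one_mul] using h
    rw [← integral_finset_sum _ (fun a _ => hint1 a)]
    have haeq : (fun ξ : EuclideanSpace ℝ (Fin m) =>
        ∑ a : Fin d, ((Real.exp (-‖ξ‖ ^ 2) : ℝ) : ℂ) * Pi i ξ a a)
        =ᵐ[volume] fun ξ : EuclideanSpace ℝ (Fin m) =>
          ((dd i : ℂ)) * ((Real.exp (-‖ξ‖ ^ 2) : ℝ) : ℂ) := by
      filter_upwards [h0] with ξ hξ
      rw [← Finset.mul_sum]
      have htrξ : ∑ a : Fin d, Pi i ξ a a = (dd i : ℂ) := by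
        have h := htr i ξ hξ
        simpa [Matrix.trace, Matrix.diag] using h
      rw [htrξ]; ring
    have hcoe : ∫ ξ : EuclideanSpace ℝ (Fin m), ((Real.exp (-‖ξ‖ ^ 2) : ℝ) : ℂ)
        = (((∫ ξ : EuclideanSpace ℝ (Fin m), Real.exp (-‖ξ‖ ^ 2)) : ℝ) : ℂ) :=
      integral_ofReal
    rw [integral_congr_ae haeq, integral_const_mul, hcoe, hgint]
    calc ((Real.pi ^ (-(m : ℝ) / 2) : ℝ) : ℂ)
          * ((dd i : ℂ) * ((Real.pi ^ ((m : ℝ) / 2) : ℝ) : ℂ))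
        = (((Real.pi ^ (-(m : ℝ) / 2) : ℝ) : ℂ)
            * ((Real.pi ^ ((m : ℝ) / 2) : ℝ) : ℂ)) * (dd i : ℂ) := by ring
      _ = (dd i : ℂ) := by rw [hπ, one_mul]
  have h3 : ∫ ξ : EuclideanSpace ℝ (Fin m), (NormedSpace.exp (-leadSymb μ Pi ξ)).trace
      = ∑ a : Fin d, ∫ ξ : EuclideanSpace ℝ (Fin m),
          (NormedSpace.exp (-leadSymb μ Pi ξ)) a a := by
    rw [← integral_finset_sum _ (fun a _ => part1 a a)]
    congr 1
  rw [h3, Finset.mul_sum]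
  calc ∑ a : Fin d, ((Real.pi ^ (-(m : ℝ) / 2) : ℝ) : ℂ)
        * ∫ ξ : EuclideanSpace ℝ (Fin m), (NormedSpace.exp (-leadSymb μ Pi ξ)) a a
      = ∑ a : Fin d, (∑ i, (((μ i ^ (-(m : ℝ) / 2) : ℝ)) : ℂ) • gaussAvg (Pi i)) a a :=
        Finset.sum_congr rfl (fun a _ => part2 a a)
    _ = ∑ i, (dd i : ℂ) * (((μ i ^ (-(m : ℝ) / 2) : ℝ)) : ℂ) := by
        simp only [Matrix.sum_apply, Matrix.smul_apply, smul_eq_mul]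
        rw [Finset.sum_comm]
        refine Finset.sum_congr rfl fun i _ => ?_
        rw [← Finset.mul_sum, htrg i, mul_comm]

end NLT
end
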